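/- For every integer n ≥ 2 and every triple (i,j,k) with 1 ≤ i, j ≤ n−1 and 0 ≤ k ≤ min{i−1, j−1, n−1−i, n−1−j}, the permutation b(i,j,k) is bigrassmannian, its unique left descent is i, and its unique right descent is j. -/

import Mathlib

namespace Paper

/-- The simple transposition `s_i = (i, i+1)` (1-based) in `S_n`, realized as a
permutation of `Fin n`. For `i` outside `{1, …, n-1}` we set `s i = 1`. -/
def s (n i : ℕ) : Equiv.Perm (Fin n) :=
  if h : 1 ≤ i ∧ i < n then Equiv.swap ⟨i - 1, by omega⟩ ⟨i, by omega⟩ else 1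

/-- The length of a permutation: its number of inversions. -/
def len {n : ℕ} (w : Equiv.Perm (Fin n)) : ℕ :=
  (Finset.univ.filter (fun p : Fin n × Fin n => p.1 < p.2 ∧ w p.2 < w p.1)).card

/-- `i` is a left descent of `w` if `1 ≤ i ≤ n-1` and `ℓ(s_i w) < ℓ(w)`. -/
def IsLeftDescent {n : ℕ} (w : Equiv.Perm (Fin n)) (i : ℕ) : Prop :=
  1 ≤ i ∧ i ≤ n - 1 ∧ len (s n i * w) < len w

/-- `i` is a right descent of `w` if `1 ≤ i ≤ n-1` and `ℓ(w s_i) < ℓ(w)`. -/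
def IsRightDescent {n : ℕ} (w : Equiv.Perm (Fin n)) (i : ℕ) : Prop :=
  1 ≤ i ∧ i ≤ n - 1 ∧ len (w * s n i) < len w

/-- A permutation is bigrassmannian if it has exactly one left descent and
exactly one right descent. -/
def Bigrassmannian {n : ℕ} (w : Equiv.Perm (Fin n)) : Prop :=
  (∃! i, IsLeftDescent w i) ∧ (∃! j, IsRightDescent w j)

/-- One step of the Bruhat order: `w ⋖ t * w` for a transposition `t`
with `ℓ(w) < ℓ(t w)`. -/
def BruhatStep {n : ℕ} (w w' : Equiv.Perm (Fin n)) : Prop :=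
  ∃ a b : Fin n, a ≠ b ∧ w' = Equiv.swap a b * w ∧ len w < len w'

/-- The Bruhat order on `S_n`: the partial order generated by `w < tw` whenever
`t` is a transposition and `ℓ(w) < ℓ(tw)`. -/
def BruhatLE {n : ℕ} : Equiv.Perm (Fin n) → Equiv.Perm (Fin n) → Prop :=
  Relation.ReflTransGen BruhatStep

/-- Strict Bruhat order. -/
def BruhatLT {n : ℕ} (x y : Equiv.Perm (Fin n)) : Prop :=
  BruhatLE x y ∧ x ≠ y

/-- The product `s_a s_{a+1} ⋯ s_b` of consecutive simple transpositions. -/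
def ascRun (n a b : ℕ) : Equiv.Perm (Fin n) :=
  ((List.range (b + 1 - a)).map (fun t => s n (a + t))).prod

/-- For `i ≤ j`: `b(i,j,k) = (s_i ⋯ s_{j+k})(s_{i-1} ⋯ s_{j+k-1}) ⋯ (s_{i-k} ⋯ s_j)`. -/
def bAux (n i j k : ℕ) : Equiv.Perm (Fin n) :=
  ((List.range (k + 1)).map (fun m => ascRun n (i - m) (j + k - m))).prod

/-- The bigrassmannian permutation `b(i,j,k)`; for `j < i` it is `b(j,i,k)⁻¹`. -/
def b (n i j k : ℕ) : Equiv.Perm (Fin n) :=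
  if i ≤ j then bAux n i j k else (bAux n j i k)⁻¹

/-- The value `w(i)` of a permutation `w ∈ S_n` at `i ∈ {1, …, n}`, 1-based. -/
def act {n : ℕ} (w : Equiv.Perm (Fin n)) (i : ℕ) : ℕ :=
  if h : 1 ≤ i ∧ i ≤ n then ((w ⟨i - 1, by omega⟩ : Fin n) : ℕ) + 1 else i

/-- The essential set of a permutation `w ∈ S_n`. -/
def Ess {n : ℕ} (w : Equiv.Perm (Fin n)) : Set (ℕ × ℕ) :=
  {p | 1 ≤ p.1 ∧ p.1 ≤ n - 1 ∧ 1 ≤ p.2 ∧ p.2 ≤ n - 1 ∧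
    p.1 < act w⁻¹ p.2 ∧ p.2 < act w p.1 ∧
    act w (p.1 + 1) ≤ p.2 ∧ act w⁻¹ (p.2 + 1) ≤ p.1}

/-- The rank function `r_w(i,j) = |{k ≤ i : w(k) ≤ j}|` (1-based). -/
def rnk {n : ℕ} (w : Equiv.Perm (Fin n)) (i j : ℕ) : ℕ :=
  ((Finset.Icc 1 i).filter (fun k => act w k ≤ j)).card

/-- The co-rank function `t_w(i,j) = min{i,j} - r_w(i,j)`. -/
def cork {n : ℕ} (w : Equiv.Perm (Fin n)) (i j : ℕ) : ℕ :=
  min i j - rnk w i j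

/-- The set of bigrassmannian permutations `y ≤ w` in Bruhat order. -/
def BSet {n : ℕ} (w : Equiv.Perm (Fin n)) : Set (Equiv.Perm (Fin n)) :=
  {y | Bigrassmannian y ∧ BruhatLE y w}

/-- The set of Bruhat-maximal elements of `BSet w`. -/
def BM {n : ℕ} (w : Equiv.Perm (Fin n)) : Set (Equiv.Perm (Fin n)) :=
  {y ∈ BSet w | ∀ z ∈ BSet w, BruhatLE y z → z = y}


-- ===== auxiliary lemmas for stmt4 =====

lemma s_inv (n i : ℕ) : (s n i)⁻¹ = s n i := by
  unfold s; split
  · exact Equiv.swap_inv _ _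
  · rfl

lemma s_apply (n i : ℕ) (h1 : 1 ≤ i) (h2 : i < n) (x : Fin n) :
    ((s n i x : Fin n) : ℕ) = if (x : ℕ) = i - 1 then i else if (x : ℕ) = i then i - 1 else x := by
  unfold s
  rw [dif_pos ⟨h1, h2⟩, Equiv.swap_apply_def]
  split_ifs <;> simp only [Fin.ext_iff, Fin.val_mk] at * <;> omega

lemma swap_lt {n : ℕ} (a b x y : Fin n) (hab : (a : ℕ) + 1 = b) :
    Equiv.swap a b y < Equiv.swap a b x ↔
      ((y < x ∧ ¬(x = b ∧ y = a)) ∨ (x = a ∧ y = b)) := by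
  simp only [Equiv.swap_apply_def]
  split_ifs <;> simp only [Fin.lt_def, Fin.ext_iff, not_and] at * <;> omega

lemma len_swap_mul_of_lt {n : ℕ} (w : Equiv.Perm (Fin n)) (a b : Fin n)
    (hab : (a : ℕ) + 1 = b) (h : w⁻¹ a < w⁻¹ b) :
    len (Equiv.swap a b * w) = len w + 1 := by
  classical
  have hkey : (Finset.univ.filter
      (fun p : Fin n × Fin n => p.1 < p.2 ∧ (Equiv.swap a b * w) p.2 < (Equiv.swap a b * w) p.1))
      = insert (w⁻¹ a, w⁻¹ b)
        (Finset.univ.filter (fun p : Fin n × Fin n => p.1 < p.2 ∧ w p.2 < w p.1)) := by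
    ext ⟨p, q⟩
    simp only [Finset.mem_insert, Finset.mem_filter, Finset.mem_univ, true_and]
    simp only [Finset.mem_insert, Finset.mem_filter, Finset.mem_univ, true_and,
      Equiv.Perm.mul_apply, Prod.mk.injEq]
    rw [swap_lt _ _ _ _ hab]
    constructor
    · rintro ⟨hpq, (⟨hlt, hne⟩ | ⟨hxa, hyb⟩)⟩
      · exact Or.inr ⟨hpq, hlt⟩
      · left
        constructor
        · rw [← hxa]; simp
        · rw [← hyb]; simp
    · rintro (⟨hp, hq⟩ | ⟨hpq, hlt⟩)
      · subst hp; subst hq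
        refine ⟨h, Or.inr ⟨by simp, by simp⟩⟩
      · refine ⟨hpq, Or.inl ⟨hlt, ?_⟩⟩
        rintro ⟨hb, ha⟩
        have hp' : p = w⁻¹ b := by rw [← hb]; simp
        have hq' : q = w⁻¹ a := by rw [← ha]; simp
        rw [hp', hq'] at hpq
        exact absurd h (not_lt.mpr hpq.le)
  have hnotmem : (w⁻¹ a, w⁻¹ b) ∉
      (Finset.univ.filter (fun p : Fin n × Fin n => p.1 < p.2 ∧ w p.2 < w p.1)) := by
    simp only [Finset.mem_filter, Finset.mem_univ, true_and, not_and]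
    intro _
    simp only [← Equiv.Perm.mul_apply, mul_inv_cancel, Equiv.Perm.one_apply]
    intro hba
    simp only [Fin.lt_def] at hba
    omega
  unfold len
  rw [hkey, Finset.card_insert_of_notMem hnotmem]

lemma len_swap_mul_of_ge {n : ℕ} (w : Equiv.Perm (Fin n)) (a b : Fin n)
    (hab : (a : ℕ) + 1 = b) (h : ¬ w⁻¹ a < w⁻¹ b) :
    len w = len (Equiv.swap a b * w) + 1 := by
  have hne : a ≠ b := by simp [Fin.ext_iff]; omega
  set w' := Equiv.swap a b * w with hw'
  have hww : w = Equiv.swap a b * w' := by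
    rw [hw', ← mul_assoc, Equiv.swap_mul_self, one_mul]
  have ha' : w'⁻¹ a = w⁻¹ b := by
    rw [hw']; simp [Equiv.swap_apply_left]
  have hb' : w'⁻¹ b = w⁻¹ a := by
    rw [hw']; simp [Equiv.swap_apply_right]
  have hlt : w'⁻¹ a < w'⁻¹ b := by
    rw [ha', hb']
    rcases lt_or_eq_of_le (not_lt.mp h) with h' | h'
    · exact h'
    · exact absurd (w⁻¹.injective (by rw [h'] : w⁻¹ b = w⁻¹ a)) (by simpa using hne.symm)
  rw [hww]
  exact len_swap_mul_of_lt w' a b hab hlt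

lemma len_inv {n : ℕ} (w : Equiv.Perm (Fin n)) : len w⁻¹ = len w := by
  classical
  unfold len
  apply Finset.card_nbij' (fun p => (w⁻¹ p.2, w⁻¹ p.1)) (fun p => (w p.2, w p.1))
  · intro ⟨p, q⟩ hm
    simp only [Finset.mem_coe, Finset.mem_filter, Finset.mem_univ, true_and] at *
    simpa using ⟨hm.2, hm.1⟩
  · intro ⟨p, q⟩ hm
    simp only [Finset.mem_coe, Finset.mem_filter, Finset.mem_univ, true_and] at *
    simpa using ⟨hm.2, hm.1⟩
  · intro p hm; simp
  · intro p hm; simp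

lemma isLeftDescent_iff {n : ℕ} (w : Equiv.Perm (Fin n)) (i : ℕ) (h1 : 1 ≤ i) (h2 : i < n) :
    IsLeftDescent w i ↔ ((w⁻¹ ⟨i, h2⟩ : Fin n) : ℕ) < ((w⁻¹ ⟨i - 1, by omega⟩ : Fin n) : ℕ) := by
  set a : Fin n := ⟨i - 1, by omega⟩
  set bb : Fin n := ⟨i, h2⟩
  have hab : (a : ℕ) + 1 = bb := by simp [a, bb]; omega
  have hs : s n i = Equiv.swap a bb := by unfold s; rw [dif_pos ⟨h1, h2⟩]
  constructor
  · rintro ⟨-, -, hlt⟩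
    by_contra hge
    have : w⁻¹ a < w⁻¹ bb := by
      rcases lt_trichotomy (w⁻¹ a) (w⁻¹ bb) with h' | h' | h'
      · exact h'
      · exact absurd (congrArg w (h' : w⁻¹ a = w⁻¹ bb)) (by
          simp only [← Equiv.Perm.mul_apply, mul_inv_cancel, Equiv.Perm.one_apply]
          simp [Fin.ext_iff, a, bb]; omega)
      · exact absurd (Fin.lt_def.mp h') (by omega)
    have := len_swap_mul_of_lt w a bb hab this
    rw [hs] at hlt; omega
  · intro hlt
    refine ⟨h1, by omega, ?_⟩
    rw [hs]
    have := len_swap_mul_of_ge w a bb hab (by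
      intro hcon
      exact absurd (Fin.lt_def.mp hcon) (by omega))
    omega

lemma isLeftDescent_inv_iff {n : ℕ} (w : Equiv.Perm (Fin n)) (i : ℕ) :
    IsLeftDescent w⁻¹ i ↔ IsRightDescent w i := by
  unfold IsRightDescent IsLeftDescent
  have h : len (s n i * w⁻¹) = len (w * s n i) := by
    have h2 : s n i * w⁻¹ = (w * s n i)⁻¹ := by
      rw [mul_inv_rev, s_inv]
    rw [h2, len_inv]
  rw [h, len_inv]

lemma isRightDescent_iff {n : ℕ} (w : Equiv.Perm (Fin n)) (i : ℕ) (h1 : 1 ≤ i) (h2 : i < n) :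
    IsRightDescent w i ↔ ((w ⟨i, h2⟩ : Fin n) : ℕ) < ((w ⟨i - 1, by omega⟩ : Fin n) : ℕ) := by
  rw [← isLeftDescent_inv_iff, isLeftDescent_iff w⁻¹ i h1 h2, inv_inv]

lemma bigrassmannian_inv {n : ℕ} (w : Equiv.Perm (Fin n)) (h : Bigrassmannian w) :
    Bigrassmannian w⁻¹ := by
  obtain ⟨hL, hR⟩ := h
  constructor
  · exact (existsUnique_congr (fun x => isLeftDescent_inv_iff w x)).mpr hR
  · refine (existsUnique_congr (fun x => ?_)).mpr hL
    rw [← isLeftDescent_inv_iff w⁻¹ x, inv_inv]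

lemma bAux_zero (n i j : ℕ) : bAux n i j 0 = ascRun n i j := by
  unfold bAux
  norm_num [List.range_succ]

lemma bAux_succ (n i j k : ℕ) :
    bAux n i j (k + 1) = ascRun n i (j + (k + 1)) * bAux n (i - 1) j k := by
  unfold bAux
  rw [List.range_succ_eq_map]
  simp only [List.map_cons, List.prod_cons, List.map_map, Nat.sub_zero]
  congr 1
  apply congrArg List.prod
  apply List.map_congr_left
  intro t ht
  simp only [Function.comp]
  rw [List.mem_range] at ht
  congr 1 <;> omega

lemma ascRun_single (n a : ℕ) : ascRun n a a = s n a := by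
  unfold ascRun
  norm_num [List.range_succ]

lemma ascRun_succ (n a b : ℕ) (h : a ≤ b) :
    ascRun n a b = s n a * ascRun n (a + 1) b := by
  unfold ascRun
  have h1 : b + 1 - a = (b - a) + 1 := by omega
  have h2 : b + 1 - (a + 1) = b - a := by omega
  rw [h1, h2, List.range_succ_eq_map]
  simp only [List.map_cons, List.prod_cons, List.map_map]
  apply congrArg
  apply congrArg List.prod
  apply List.map_congr_left
  intro t _
  simp only [Function.comp]
  congr 1
  omega

lemma ascRun_apply (n a b : ℕ) (h1 : 1 ≤ a) (hab : a ≤ b) (h2 : b < n) (x : Fin n) :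
    ((ascRun n a b x : Fin n) : ℕ) =
      if a - 1 ≤ (x : ℕ) ∧ (x : ℕ) ≤ b - 1 then (x : ℕ) + 1
      else if (x : ℕ) = b then a - 1 else (x : ℕ) := by
  obtain ⟨d, rfl⟩ : ∃ d, b = a + d := ⟨b - a, by omega⟩
  clear hab
  induction d generalizing a x with
  | zero =>
    rw [Nat.add_zero] at *
    rw [ascRun_single, s_apply n a h1 h2]
    split_ifs <;> omega
  | succ d ih =>
    rw [ascRun_succ n a (a + (d+1)) (by omega), Equiv.Perm.mul_apply]
    have hrec := ih (a + 1) (by omega) x (by omega : a + 1 + d < n)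
    rw [(by omega : a + 1 + d = a + (d + 1))] at hrec
    rw [s_apply n a h1 (by omega)]
    rw [hrec]
    split_ifs <;> omega

def ff (i j k p : ℕ) : ℕ :=
  if i - 1 - k ≤ p ∧ p ≤ j - 1 then p + (k + 1)
  else if j ≤ p ∧ p ≤ j + k then p - (j - i + k + 1)
  else p

lemma bAux_apply (n i j k : ℕ) (h1 : 1 ≤ i) (hij : i ≤ j) (hkn : j + k + 1 ≤ n)
    (hki : k + 1 ≤ i) (x : Fin n) :
    ((bAux n i j k x : Fin n) : ℕ) = ff i j k (x : ℕ) := by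
  induction k generalizing i x with
  | zero =>
    rw [bAux_zero, ascRun_apply n i j h1 hij (by omega)]
    unfold ff
    split_ifs <;> omega
  | succ k ih =>
    rw [bAux_succ, Equiv.Perm.mul_apply]
    rw [ascRun_apply n i (j + (k + 1)) h1 (by omega) (by omega),
      ih (i - 1) (by omega) (by omega) (by omega) (by omega) x]
    unfold ff
    have hx : (x : ℕ) < n := x.isLt
    split_ifs <;> omega

lemma bAux_inv_apply (n i j k : ℕ) (h1 : 1 ≤ i) (hij : i ≤ j) (hkn : j + k + 1 ≤ n)
    (hki : k + 1 ≤ i) (y : Fin n) :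
    (((bAux n i j k)⁻¹ y : Fin n) : ℕ) =
      (if i ≤ (y : ℕ) ∧ (y : ℕ) ≤ j + k then (y : ℕ) - (k + 1)
       else if i - 1 - k ≤ (y : ℕ) ∧ (y : ℕ) ≤ i - 1 then (y : ℕ) + (j - i + k + 1)
       else (y : ℕ)) := by
  set g : ℕ := (if i ≤ (y : ℕ) ∧ (y : ℕ) ≤ j + k then (y : ℕ) - (k + 1)
       else if i - 1 - k ≤ (y : ℕ) ∧ (y : ℕ) ≤ i - 1 then (y : ℕ) + (j - i + k + 1)
       else (y : ℕ)) with hg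
  have hy : (y : ℕ) < n := y.isLt
  have hgn : g < n := by
    rw [hg]; split_ifs <;> omega
  have hfwd : bAux n i j k ⟨g, hgn⟩ = y := by
    apply Fin.ext
    rw [bAux_apply n i j k h1 hij hkn hki]
    simp only [Fin.val_mk]
    rw [hg]; unfold ff
    split_ifs <;> omega
  rw [← hfwd, ← Equiv.Perm.mul_apply, inv_mul_cancel, Equiv.Perm.one_apply]

lemma main_core (n i j k : ℕ) (h1 : 1 ≤ i) (hij : i ≤ j) (hkn : j + k + 1 ≤ n)
    (hki : k + 1 ≤ i) :
    Bigrassmannian (bAux n i j k) ∧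
      IsLeftDescent (bAux n i j k) i ∧ IsRightDescent (bAux n i j k) j := by
  set w := bAux n i j k with hw
  have hL : ∀ i', IsLeftDescent w i' ↔ i' = i := by
    intro i'
    by_cases h : 1 ≤ i' ∧ i' < n
    · rw [isLeftDescent_iff w i' h.1 h.2,
        bAux_inv_apply n i j k h1 hij hkn hki ⟨i', h.2⟩,
        bAux_inv_apply n i j k h1 hij hkn hki ⟨i' - 1, by omega⟩]
      simp only [Fin.val_mk]
      split_ifs <;> omega
    · constructor
      · rintro ⟨ha, hb, -⟩; omega
      · rintro rfl; omega
  have hR : ∀ j', IsRightDescent w j' ↔ j' = j := by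
    intro j'
    by_cases h : 1 ≤ j' ∧ j' < n
    · rw [isRightDescent_iff w j' h.1 h.2,
        bAux_apply n i j k h1 hij hkn hki ⟨j', h.2⟩,
        bAux_apply n i j k h1 hij hkn hki ⟨j' - 1, by omega⟩]
      simp only [Fin.val_mk]
      unfold ff
      split_ifs <;> omega
    · constructor
      · rintro ⟨ha, hb, -⟩; omega
      · rintro rfl; omega
  refine ⟨⟨⟨i, (hL i).mpr rfl, fun y hy => (hL y).mp hy⟩,
    ⟨j, (hR j).mpr rfl, fun y hy => (hR y).mp hy⟩⟩,
    (hL i).mpr rfl, (hR j).mpr rfl⟩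

theorem stmt4 (n : ℕ) (hn : 2 ≤ n) (i j k : ℕ)
    (hi1 : 1 ≤ i) (hi2 : i ≤ n - 1) (hj1 : 1 ≤ j) (hj2 : j ≤ n - 1)
    (hk : k ≤ min (min (i - 1) (j - 1)) (min (n - 1 - i) (n - 1 - j))) :
    Bigrassmannian (b n i j k) ∧
      IsLeftDescent (b n i j k) i ∧ IsRightDescent (b n i j k) j := by
  rcases le_or_gt i j with hij | hji
  · have hb : b n i j k = bAux n i j k := if_pos hij
    rw [hb]
    exact main_core n i j k hi1 hij (by omega) (by omega)
  · have hb : b n i j k = (bAux n j i k)⁻¹ := if_neg (by omega)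
    rw [hb]
    obtain ⟨hbg, hld, hrd⟩ := main_core n j i k hj1 (le_of_lt hji) (by omega) (by omega)
    refine ⟨bigrassmannian_inv _ hbg, ?_, ?_⟩
    · exact (isLeftDescent_inv_iff (bAux n j i k) i).mpr hrd
    · exact (isLeftDescent_inv_iff (bAux n j i k)⁻¹ j).mp (by rwa [inv_inv])

end Paper
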